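/- One-point amalgamation of finite metric spaces: Let (X₀,d₀) and (X₁,d₁) be finite metric spaces such that Z = X₀ ∩ X₁ is nonempty, d₀ and d₁ agree on Z × Z, and Xᵢ = Z ∪ {pᵢ} for i = 0,1 with p₀ ≠ p₁, p₀ ∉ X₁, p₁ ∉ X₀. Then ℓ := max_{z∈Z} |d₀(p₀,z) − d₁(z,p₁)| ≤ min_{z∈Z} (d₀(p₀,z) + d₁(z,p₁)) =: r, and for every value s with ℓ ≤ s ≤ r and 0 < s, the symmetric extension d of d₀ ∪ d₁ to X₀ ∪ X₁ defined by d(p₀,p₁) = d(p₁,p₀) = s is a metric on X₀ ∪ X₁. -/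
import Mathlib


open Set
open scoped Classical

/-- `d` is a metric on the set `S`. -/
def IsMetricOn {T : Type} (d : T → T → ℝ) (S : Set T) : Prop :=
  (∀ a ∈ S, d a a = 0) ∧
  (∀ a ∈ S, ∀ b ∈ S, a ≠ b → 0 < d a b) ∧
  (∀ a ∈ S, ∀ b ∈ S, d a b = d b a) ∧
  (∀ a ∈ S, ∀ b ∈ S, ∀ c ∈ S, d a c ≤ d a b + d b c)

/-- One-point amalgamation of finite metric spaces: `ℓ ≤ r`
(stated pointwise: `|d₀(p₀,z) − d₁(z,p₁)| ≤ d₀(p₀,w) + d₁(w,p₁)` for all `z, w ∈ Z`),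
and for every `s` with `ℓ ≤ s ≤ r` and `0 < s`, the symmetric extension of
`d₀ ∪ d₁` with `d(p₀,p₁) = d(p₁,p₀) = s` is a metric on `X₀ ∪ X₁`. -/
theorem one_point_amalgamation (T : Type) (Z : Set T) (p₀ p₁ : T)
    (hZfin : Z.Finite) (hZne : Z.Nonempty)
    (hp₀ : p₀ ∉ Z) (hp₁ : p₁ ∉ Z) (hne : p₀ ≠ p₁)
    (d₀ d₁ : T → T → ℝ)
    (hd₀ : IsMetricOn d₀ (insert p₀ Z)) (hd₁ : IsMetricOn d₁ (insert p₁ Z))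
    (hagree : ∀ a ∈ Z, ∀ b ∈ Z, d₀ a b = d₁ a b) :
    (∀ z ∈ Z, ∀ w ∈ Z, |d₀ p₀ z - d₁ z p₁| ≤ d₀ p₀ w + d₁ w p₁) ∧
    ∀ s : ℝ, 0 < s →
      (∀ z ∈ Z, |d₀ p₀ z - d₁ z p₁| ≤ s) →
      (∀ z ∈ Z, s ≤ d₀ p₀ z + d₁ z p₁) →
      IsMetricOn
        (fun a b =>
          if (a = p₀ ∧ b = p₁) ∨ (a = p₁ ∧ b = p₀) then s
          else if a ∈ insert p₀ Z ∧ b ∈ insert p₀ Z then d₀ a b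
          else d₁ a b)
        (insert p₀ (insert p₁ Z)) := by
  obtain ⟨h0r, h0p, h0s, h0t⟩ := hd₀
  obtain ⟨h1r, h1p, h1s, h1t⟩ := hd₁
  have hp₀X : p₀ ∈ insert p₀ Z := mem_insert _ _
  have hp₁X : p₁ ∈ insert p₁ Z := mem_insert _ _
  have hZ0 : ∀ z ∈ Z, z ∈ insert p₀ Z := fun z hz => mem_insert_of_mem _ hz
  have hZ1 : ∀ z ∈ Z, z ∈ insert p₁ Z := fun z hz => mem_insert_of_mem _ hz
  constructor
  · intro z hz w hw
    rw [abs_le]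
    have t1 : d₀ p₀ z ≤ d₀ p₀ w + d₀ w z := h0t _ hp₀X _ (hZ0 w hw) _ (hZ0 z hz)
    have t2 : d₁ w z ≤ d₁ w p₁ + d₁ p₁ z := h1t _ (hZ1 w hw) _ hp₁X _ (hZ1 z hz)
    have t3 : d₁ z p₁ ≤ d₁ z w + d₁ w p₁ := h1t _ (hZ1 z hz) _ (hZ1 w hw) _ hp₁X
    have t4 : d₀ z w ≤ d₀ z p₀ + d₀ p₀ w := h0t _ (hZ0 z hz) _ hp₀X _ (hZ0 w hw)
    have e1 : d₀ w z = d₁ w z := hagree w hw z hz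
    have e2 : d₀ z w = d₁ z w := hagree z hz w hw
    have s1 : d₁ p₁ z = d₁ z p₁ := h1s _ hp₁X _ (hZ1 z hz)
    have s2 : d₀ z p₀ = d₀ p₀ z := h0s _ (hZ0 z hz) _ hp₀X
    constructor <;> linarith
  · intro s hs hℓ hr
    set D : T → T → ℝ := fun a b =>
      if (a = p₀ ∧ b = p₁) ∨ (a = p₁ ∧ b = p₀) then s
      else if a ∈ insert p₀ Z ∧ b ∈ insert p₀ Z then d₀ a b
      else d₁ a b with hD
    have f1 : ∀ z ∈ Z, d₀ p₀ z ≤ s + d₁ z p₁ := fun z hz => by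
      have := abs_le.mp (hℓ z hz); linarith [this.2]
    have f2 : ∀ z ∈ Z, d₁ z p₁ ≤ s + d₀ p₀ z := fun z hz => by
      have := abs_le.mp (hℓ z hz); linarith [this.1]
    have hDv0 : ∀ a ∈ insert p₀ Z, ∀ b ∈ insert p₀ Z, D a b = d₀ a b := by
      intro a ha b hb
      have ha1 : a ≠ p₁ := by
        rcases ha with rfl | ha
        · exact hne
        · exact fun h => hp₁ (h ▸ ha)
      have hb1 : b ≠ p₁ := by
        rcases hb with rfl | hb
        · exact hne
        · exact fun h => hp₁ (h ▸ hb)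
      simp only [hD]
      rw [if_neg, if_pos ⟨ha, hb⟩]
      rintro (⟨-, h⟩ | ⟨h, -⟩)
      · exact hb1 h
      · exact ha1 h
    have hDv1 : ∀ a ∈ insert p₁ Z, ∀ b ∈ insert p₁ Z, D a b = d₁ a b := by
      intro a ha b hb
      have ha0 : a ≠ p₀ := by
        rcases ha with rfl | ha
        · exact hne.symm
        · exact fun h => hp₀ (h ▸ ha)
      have hb0 : b ≠ p₀ := by
        rcases hb with rfl | hb
        · exact hne.symm
        · exact fun h => hp₀ (h ▸ hb)
      simp only [hD]
      rw [if_neg]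
      · split_ifs with h
        · obtain ⟨haX, hbX⟩ := h
          have haZ : a ∈ Z := by
            rcases haX with rfl | h'
            · exact absurd rfl ha0
            · exact h'
          have hbZ : b ∈ Z := by
            rcases hbX with rfl | h'
            · exact absurd rfl hb0
            · exact h'
          exact hagree a haZ b hbZ
        · rfl
      · rintro (⟨h, -⟩ | ⟨-, h⟩)
        · exact ha0 h
        · exact hb0 h
    have hD01 : D p₀ p₁ = s := by
      show (if (p₀ = p₀ ∧ p₁ = p₁) ∨ (p₀ = p₁ ∧ p₁ = p₀) then s
        else if p₀ ∈ insert p₀ Z ∧ p₁ ∈ insert p₀ Z then d₀ p₀ p₁ else d₁ p₀ p₁) = s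
      rw [if_pos (Or.inl ⟨rfl, rfl⟩)]
    have hD10 : D p₁ p₀ = s := by
      show (if (p₁ = p₀ ∧ p₀ = p₁) ∨ (p₁ = p₁ ∧ p₀ = p₀) then s
        else if p₁ ∈ insert p₀ Z ∧ p₀ ∈ insert p₀ Z then d₀ p₁ p₀ else d₁ p₁ p₀) = s
      rw [if_pos (Or.inr ⟨rfl, rfl⟩)]
    have hmem : ∀ x ∈ insert p₀ (insert p₁ Z), x = p₀ ∨ x = p₁ ∨ x ∈ Z := by
      intro x hx
      rcases hx with rfl | hx
      · exact Or.inl rfl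
      · rcases hx with rfl | hx
        · exact Or.inr (Or.inl rfl)
        · exact Or.inr (Or.inr hx)
    refine ⟨?_, ?_, ?_, ?_⟩
    · -- reflexivity
      intro a ha
      rcases hmem a ha with rfl | rfl | haZ
      · rw [hDv0 _ hp₀X _ hp₀X]; exact h0r _ hp₀X
      · rw [hDv1 _ hp₁X _ hp₁X]; exact h1r _ hp₁X
      · rw [hDv0 _ (hZ0 _ haZ) _ (hZ0 _ haZ)]; exact h0r _ (hZ0 _ haZ)
    · -- positivity
      intro a ha b hb hab
      rcases hmem a ha with rfl | rfl | haZ <;> rcases hmem b hb with rfl | rfl | hbZ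
      · exact absurd rfl hab
      · rw [hD01]; exact hs
      · rw [hDv0 _ hp₀X _ (hZ0 _ hbZ)]; exact h0p _ hp₀X _ (hZ0 _ hbZ) hab
      · rw [hD10]; exact hs
      · exact absurd rfl hab
      · rw [hDv1 _ hp₁X _ (hZ1 _ hbZ)]; exact h1p _ hp₁X _ (hZ1 _ hbZ) hab
      · rw [hDv0 _ (hZ0 _ haZ) _ hp₀X]; exact h0p _ (hZ0 _ haZ) _ hp₀X hab
      · rw [hDv1 _ (hZ1 _ haZ) _ hp₁X]; exact h1p _ (hZ1 _ haZ) _ hp₁X hab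
      · rw [hDv0 _ (hZ0 _ haZ) _ (hZ0 _ hbZ)]; exact h0p _ (hZ0 _ haZ) _ (hZ0 _ hbZ) hab
    · -- symmetry
      intro a ha b hb
      rcases hmem a ha with rfl | rfl | haZ <;> rcases hmem b hb with rfl | rfl | hbZ
      · rfl
      · rw [hD01, hD10]
      · rw [hDv0 _ hp₀X _ (hZ0 _ hbZ), hDv0 _ (hZ0 _ hbZ) _ hp₀X]
        exact h0s _ hp₀X _ (hZ0 _ hbZ)
      · rw [hD01, hD10]
      · rfl
      · rw [hDv1 _ hp₁X _ (hZ1 _ hbZ), hDv1 _ (hZ1 _ hbZ) _ hp₁X]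
        exact h1s _ hp₁X _ (hZ1 _ hbZ)
      · rw [hDv0 _ (hZ0 _ haZ) _ hp₀X, hDv0 _ hp₀X _ (hZ0 _ haZ)]
        exact h0s _ (hZ0 _ haZ) _ hp₀X
      · rw [hDv1 _ (hZ1 _ haZ) _ hp₁X, hDv1 _ hp₁X _ (hZ1 _ haZ)]
        exact h1s _ (hZ1 _ haZ) _ hp₁X
      · rw [hDv0 _ (hZ0 _ haZ) _ (hZ0 _ hbZ), hDv0 _ (hZ0 _ hbZ) _ (hZ0 _ haZ)]
        exact h0s _ (hZ0 _ haZ) _ (hZ0 _ hbZ)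
    · -- triangle inequality
      intro a ha b hb c hc
      have h00 : d₀ p₀ p₀ = 0 := h0r _ hp₀X
      have h11 : d₁ p₁ p₁ = 0 := h1r _ hp₁X
      rcases hmem a ha with rfl | rfl | haZ <;> rcases hmem b hb with rfl | rfl | hbZ <;>
        rcases hmem c hc with rfl | rfl | hcZ
      -- (0,0,0)
      · rw [hDv0 _ hp₀X _ hp₀X, h00]; linarith
      -- (0,0,1)
      · rw [hD01, hDv0 _ hp₀X _ hp₀X, h00]; linarith
      -- (0,0,z)
      · rw [hDv0 _ hp₀X _ (hZ0 _ hcZ), hDv0 _ hp₀X _ hp₀X, h00]; linarith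
      -- (0,1,0)
      · rw [hDv0 _ hp₀X _ hp₀X, h00, hD01, hD10]; linarith
      -- (0,1,1)
      · rw [hD01, hDv1 _ hp₁X _ hp₁X, h11]; linarith
      -- (0,1,z)
      · rw [hDv0 _ hp₀X _ (hZ0 _ hcZ), hD01, hDv1 _ hp₁X _ (hZ1 _ hcZ)]
        have := f1 c hcZ
        have := h1s _ hp₁X _ (hZ1 _ hcZ)
        linarith
      -- (0,z,0)
      · rw [hDv0 _ hp₀X _ hp₀X, h00, hDv0 _ hp₀X _ (hZ0 _ hbZ), hDv0 _ (hZ0 _ hbZ) _ hp₀X]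
        linarith [h0t _ hp₀X _ (hZ0 _ hbZ) _ hp₀X, h00]
      -- (0,z,1)
      · rw [hD01, hDv0 _ hp₀X _ (hZ0 _ hbZ), hDv1 _ (hZ1 _ hbZ) _ hp₁X]
        exact hr b hbZ
      -- (0,z,w)
      · rw [hDv0 _ hp₀X _ (hZ0 _ hcZ), hDv0 _ hp₀X _ (hZ0 _ hbZ),
          hDv0 _ (hZ0 _ hbZ) _ (hZ0 _ hcZ)]
        exact h0t _ hp₀X _ (hZ0 _ hbZ) _ (hZ0 _ hcZ)
      -- (1,0,0)
      · rw [hD10, hDv0 _ hp₀X _ hp₀X, h00]; linarith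
      -- (1,0,1)
      · rw [hDv1 _ hp₁X _ hp₁X, h11, hD10, hD01]; linarith
      -- (1,0,z)
      · rw [hDv1 _ hp₁X _ (hZ1 _ hcZ), hD10, hDv0 _ hp₀X _ (hZ0 _ hcZ)]
        have := f2 c hcZ
        have := h1s _ hp₁X _ (hZ1 _ hcZ)
        linarith
      -- (1,1,0)
      · rw [hD10, hDv1 _ hp₁X _ hp₁X, h11]; linarith
      -- (1,1,1)
      · rw [hDv1 _ hp₁X _ hp₁X, h11]; linarith
      -- (1,1,z)
      · rw [hDv1 _ hp₁X _ (hZ1 _ hcZ), hDv1 _ hp₁X _ hp₁X, h11]; linarith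
      -- (1,z,0)
      · rw [hD10, hDv1 _ hp₁X _ (hZ1 _ hbZ), hDv0 _ (hZ0 _ hbZ) _ hp₀X]
        have := hr b hbZ
        have := h1s _ hp₁X _ (hZ1 _ hbZ)
        have := h0s _ (hZ0 _ hbZ) _ hp₀X
        linarith
      -- (1,z,1)
      · rw [hDv1 _ hp₁X _ hp₁X, h11, hDv1 _ hp₁X _ (hZ1 _ hbZ), hDv1 _ (hZ1 _ hbZ) _ hp₁X]
        linarith [h1t _ hp₁X _ (hZ1 _ hbZ) _ hp₁X, h11]
      -- (1,z,w)
      · rw [hDv1 _ hp₁X _ (hZ1 _ hcZ), hDv1 _ hp₁X _ (hZ1 _ hbZ),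
          hDv1 _ (hZ1 _ hbZ) _ (hZ1 _ hcZ)]
        exact h1t _ hp₁X _ (hZ1 _ hbZ) _ (hZ1 _ hcZ)
      -- (z,0,0)
      · rw [hDv0 _ (hZ0 _ haZ) _ hp₀X, hDv0 _ hp₀X _ hp₀X, h00]; linarith
      -- (z,0,1)
      · rw [hDv1 _ (hZ1 _ haZ) _ hp₁X, hDv0 _ (hZ0 _ haZ) _ hp₀X, hD01]
        have := f2 a haZ
        have := h0s _ (hZ0 _ haZ) _ hp₀X
        linarith
      -- (z,0,w)
      · rw [hDv0 _ (hZ0 _ haZ) _ (hZ0 _ hcZ), hDv0 _ (hZ0 _ haZ) _ hp₀X,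
          hDv0 _ hp₀X _ (hZ0 _ hcZ)]
        exact h0t _ (hZ0 _ haZ) _ hp₀X _ (hZ0 _ hcZ)
      -- (z,1,0)
      · rw [hDv0 _ (hZ0 _ haZ) _ hp₀X, hDv1 _ (hZ1 _ haZ) _ hp₁X, hD10]
        have := f1 a haZ
        have := h0s _ (hZ0 _ haZ) _ hp₀X
        linarith
      -- (z,1,1)
      · rw [hDv1 _ (hZ1 _ haZ) _ hp₁X, hDv1 _ hp₁X _ hp₁X, h11]; linarith
      -- (z,1,w)
      · rw [hDv1 _ (hZ1 _ haZ) _ (hZ1 _ hcZ), hDv1 _ (hZ1 _ haZ) _ hp₁X,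
          hDv1 _ hp₁X _ (hZ1 _ hcZ)]
        exact h1t _ (hZ1 _ haZ) _ hp₁X _ (hZ1 _ hcZ)
      -- (z,w,0)
      · rw [hDv0 _ (hZ0 _ haZ) _ hp₀X, hDv0 _ (hZ0 _ haZ) _ (hZ0 _ hbZ),
          hDv0 _ (hZ0 _ hbZ) _ hp₀X]
        exact h0t _ (hZ0 _ haZ) _ (hZ0 _ hbZ) _ hp₀X
      -- (z,w,1)
      · rw [hDv1 _ (hZ1 _ haZ) _ hp₁X, hDv1 _ (hZ1 _ haZ) _ (hZ1 _ hbZ),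
          hDv1 _ (hZ1 _ hbZ) _ hp₁X]
        exact h1t _ (hZ1 _ haZ) _ (hZ1 _ hbZ) _ hp₁X
      -- (z,w,v)
      · rw [hDv0 _ (hZ0 _ haZ) _ (hZ0 _ hcZ), hDv0 _ (hZ0 _ haZ) _ (hZ0 _ hbZ),
          hDv0 _ (hZ0 _ hbZ) _ (hZ0 _ hcZ)]
        exact h0t _ (hZ0 _ haZ) _ (hZ0 _ hbZ) _ (hZ0 _ hcZ)
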